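/- Lemma (TSO part of Lemma 1). For every well-formed execution and every relation mfence ⊆ po, under the TSO instantiation — ppo = {(x,y) | po x y ∧ ¬(x ∈ W ∧ y ∈ R)} (program order minus write-read pairs), fences = mfence, hb = ppo ∪ fences ∪ rfe, prop = ppo ∪ fences ∪ rfe ∪ fr — the four axioms SC-PER-LOCATION (acyclic(po-loc ∪ com)), NO-THIN-AIR (acyclic(hb)), OBSERVATION (irreflexive(fre ; prop ; hb*)) and PROPAGATION (acyclic(co ∪ prop)) all hold if and only if the execution is valid on Sparc TSO, i.e. if and only if acyclic(po-loc ∪ com) and acyclic(ppo ∪ fences ∪ co ∪ rfe ∪ fr) both hold. -/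

import Mathlib

universe u v

/-- Relational composition `r1 ; r2`. -/
def rcomp {E : Type u} (r1 r2 : E → E → Prop) : E → E → Prop :=
  fun x z => ∃ y, r1 x y ∧ r2 y z

/-- `irreflexive r` : no event is related to itself. -/
def irreflexiveRel {E : Type u} (r : E → E → Prop) : Prop := ¬ ∃ x, r x x

/-- `acyclic r` : the transitive closure of `r` is irreflexive. -/
def acyclicRel {E : Type u} (r : E → E → Prop) : Prop :=
  irreflexiveRel (Relation.TransGen r)

/-- A well-formed execution `(E, po, rf, co)` together with its event data. -/
structure WellFormedExec (E : Type u) (Loc : Type v) where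
  /-- thread of an event -/
  proc : E → ℕ
  /-- memory location of an event -/
  addr : E → Loc
  /-- set of write events -/
  W : Set E
  /-- set of read events -/
  R : Set E
  po : E → E → Prop
  rf : E → E → Prop
  co : E → E → Prop
  WR_disjoint : Disjoint W R
  po_trans : ∀ x y z, po x y → po y z → po x z
  po_irrefl : ∀ x, ¬ po x x
  po_wf : ∀ x y, po x y → x ≠ y ∧ proc x = proc y
  po_total : ∀ x y, x ≠ y → proc x = proc y → po x y ∨ po y x
  rf_wf : ∀ w r, rf w r → w ∈ W ∧ r ∈ R ∧ addr w = addr r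
  rf_exists_unique : ∀ r ∈ R, ∃! w, rf w r
  co_wf : ∀ w1 w2, co w1 w2 → w1 ∈ W ∧ w2 ∈ W ∧ w1 ≠ w2 ∧ addr w1 = addr w2
  co_trans : ∀ x y z, co x y → co y z → co x z
  co_irrefl : ∀ x, ¬ co x x
  co_total : ∀ w1 w2, w1 ∈ W → w2 ∈ W → w1 ≠ w2 → addr w1 = addr w2 → co w1 w2 ∨ co w2 w1

namespace WellFormedExec

variable {E : Type u} {Loc : Type v} (X : WellFormedExec E Loc)

/-- program order restricted to the same location -/
def poloc : E → E → Prop := fun x y => X.po x y ∧ X.addr x = X.addr y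

/-- from-read -/
def fr : E → E → Prop := fun r w1 => ∃ w0, X.rf w0 r ∧ X.co w0 w1

/-- communications -/
def com : E → E → Prop := fun x y => X.co x y ∨ X.rf x y ∨ X.fr x y

/-- external read-from -/
def rfe : E → E → Prop := fun w r => X.rf w r ∧ X.proc w ≠ X.proc r

/-- external from-read -/
def fre : E → E → Prop := fun r w => X.fr r w ∧ X.proc r ≠ X.proc w

end WellFormedExec

section TSO

variable {E : Type u} {Loc : Type v}

/-- TSO preserved program order: program order minus write-read pairs. -/
def tsoPpo (X : WellFormedExec E Loc) : E → E → Prop :=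
  fun x y => X.po x y ∧ ¬(x ∈ X.W ∧ y ∈ X.R)

/-- TSO happens-before: `ppo ∪ fences ∪ rfe`, where `fences = mfence`. -/
def tsoHb (X : WellFormedExec E Loc) (mfence : E → E → Prop) : E → E → Prop :=
  fun x y => tsoPpo X x y ∨ mfence x y ∨ X.rfe x y

/-- TSO propagation order: `ppo ∪ fences ∪ rfe ∪ fr`. -/
def tsoProp (X : WellFormedExec E Loc) (mfence : E → E → Prop) : E → E → Prop :=
  fun x y => tsoPpo X x y ∨ mfence x y ∨ X.rfe x y ∨ X.fr x y

/-- The TSO part of Lemma 1: the four axioms under the TSO instantiation hold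
    iff the execution is valid on Sparc TSO. -/
theorem tso_model_equiv_sparc (X : WellFormedExec E Loc)
    (mfence : E → E → Prop) (hmf : ∀ x y, mfence x y → X.po x y) :
    (acyclicRel (fun x y => X.poloc x y ∨ X.com x y) ∧
     acyclicRel (tsoHb X mfence) ∧
     irreflexiveRel (rcomp X.fre
       (rcomp (tsoProp X mfence) (Relation.ReflTransGen (tsoHb X mfence)))) ∧
     acyclicRel (fun x y => X.co x y ∨ tsoProp X mfence x y))
    ↔ (acyclicRel (fun x y => X.poloc x y ∨ X.com x y) ∧
       acyclicRel (fun x y =>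
         tsoPpo X x y ∨ mfence x y ∨ X.co x y ∨ X.rfe x y ∨ X.fr x y)) := by
  set S : E → E → Prop :=
    fun x y => tsoPpo X x y ∨ mfence x y ∨ X.co x y ∨ X.rfe x y ∨ X.fr x y with hS
  have hmono : ∀ (r : E → E → Prop), (∀ x y, r x y → S x y) →
      acyclicRel S → acyclicRel r := by
    intro r hr hAc ⟨x, hx⟩
    exact hAc ⟨x, Relation.TransGen.mono (fun a b h => hr a b h) _ _ hx⟩
  have hSprop : ∀ x y, (X.co x y ∨ tsoProp X mfence x y) ↔ S x y := by
    intro x y; unfold tsoProp; tauto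
  have hAcIff : acyclicRel (fun x y => X.co x y ∨ tsoProp X mfence x y) ↔
      acyclicRel S := by
    constructor <;> intro h <;>
      exact fun ⟨x, hx⟩ => h ⟨x, Relation.TransGen.mono
        (fun a b hh => by rw [hSprop] at *; tauto) _ _ hx⟩
  constructor
  · rintro ⟨h1, _, _, h4⟩
    exact ⟨h1, hAcIff.mp h4⟩
  · rintro ⟨h1, h2⟩
    refine ⟨h1, ?_, ?_, hAcIff.mpr h2⟩
    · exact hmono _ (by intro x y h; unfold tsoHb at h; tauto) h2
    · rintro ⟨x, y, hfre, z, hprop, hrt⟩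
      have hSy : S x y := Or.inr (Or.inr (Or.inr (Or.inr hfre.1)))
      have hSz : S y z := by unfold tsoProp at hprop; tauto
      have hrtS : Relation.ReflTransGen S z x :=
        Relation.ReflTransGen.mono (fun a b h => by unfold tsoHb at h; tauto) _ _ hrt
      exact h2 ⟨x, Relation.TransGen.head' hSy (Relation.ReflTransGen.head hSz hrtS)⟩

end TSO
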